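/- arXiv:1804.04750 — 6 statements merged into one kernel-verified Lean document; each statement's English description precedes it below -/
import Mathlib

section
/- Let P and Q be nonzero orthogonal projections on a complex Hilbert space, let A be a bounded linear operator, and let c ≥ 0 be a real number. Then ( ‖AQ‖ − ‖AP‖ )² ≤ ‖Q(A*A − c·1)Q‖ + ‖P(A*A − c·1)P‖. -/
lemma proj_key_bound {H : Type*} [NormedAddCommGroup H]
    [InnerProductSpace ℂ H] [CompleteSpace H]
    (Q A : H →L[ℂ] H)
    (hQ_sa : IsSelfAdjoint Q) (hQ_idem : Q * Q = Q) (hQ_ne : Q ≠ 0)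
    (c : ℝ) (hc : 0 ≤ c) :
    |‖A * Q‖ ^ 2 - c| ≤ ‖Q * (star A * A - (c : ℂ) • 1) * Q‖ := by
  have hQ1 : ‖Q‖ = 1 := by
    have h2 : ‖Q‖ * ‖Q‖ = ‖Q‖ := by
      rw [← CStarRing.norm_star_mul_self, hQ_sa.star_eq, hQ_idem]
    have hpos : (0 : ℝ) < ‖Q‖ := norm_pos_iff.mpr hQ_ne
    nlinarith
  have hsq : ‖A * Q‖ ^ 2 = ‖Q * (star A * A) * Q‖ := by
    rw [sq, ← CStarRing.norm_star_mul_self (x := A * Q), star_mul, hQ_sa.star_eq]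
    congr 1
  have hdecomp : Q * (star A * A - (c : ℂ) • 1) * Q
      = Q * (star A * A) * Q - (c : ℂ) • Q := by
    simp [mul_sub, sub_mul, smul_mul_assoc, mul_smul_comm, hQ_idem]
  have hcq : ‖(c : ℂ) • Q‖ = c := by
    rw [norm_smul, hQ1, Complex.norm_real, Real.norm_eq_abs, abs_of_nonneg hc, mul_one]
  calc |‖A * Q‖ ^ 2 - c| = |‖Q * (star A * A) * Q‖ - ‖(c : ℂ) • Q‖| := by rw [hsq, hcq]
    _ ≤ ‖Q * (star A * A) * Q - (c : ℂ) • Q‖ := abs_norm_sub_norm_le _ _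
    _ = ‖Q * (star A * A - (c : ℂ) • 1) * Q‖ := by rw [hdecomp]

/-- The core C*-estimate in Lemma 3.4 of the paper: for nonzero orthogonal
projections `P`, `Q`, a bounded operator `A` and `c ≥ 0`,
`(‖AQ‖ − ‖AP‖)² ≤ ‖Q(A*A − c·1)Q‖ + ‖P(A*A − c·1)P‖`. -/
theorem projection_norm_difference_sq_bound {H : Type*} [NormedAddCommGroup H]
    [InnerProductSpace ℂ H] [CompleteSpace H]
    (P Q A : H →L[ℂ] H)
    (hP_sa : IsSelfAdjoint P) (hP_idem : P * P = P) (hP_ne : P ≠ 0)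
    (hQ_sa : IsSelfAdjoint Q) (hQ_idem : Q * Q = Q) (hQ_ne : Q ≠ 0)
    (c : ℝ) (hc : 0 ≤ c) :
    (‖A * Q‖ - ‖A * P‖) ^ 2
      ≤ ‖Q * (star A * A - (c : ℂ) • 1) * Q‖ + ‖P * (star A * A - (c : ℂ) • 1) * P‖ := by
  have hQ := proj_key_bound Q A hQ_sa hQ_idem hQ_ne c hc
  have hP := proj_key_bound P A hP_sa hP_idem hP_ne c hc
  obtain ⟨hQ1, hQ2⟩ := abs_le.mp hQ
  obtain ⟨hP1, hP2⟩ := abs_le.mp hP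
  have ha : (0 : ℝ) ≤ ‖A * Q‖ := norm_nonneg _
  have hb : (0 : ℝ) ≤ ‖A * P‖ := norm_nonneg _
  rcases le_total ‖A * Q‖ ‖A * P‖ with h | h
  · nlinarith [mul_nonneg (sub_nonneg.mpr h) ha]
  · nlinarith [mul_nonneg (sub_nonneg.mpr h) hb]
end

section
/- Let S be a finite index set, let (P_x)_{x∈S} be pairwise commuting orthogonal projections on a complex Hilbert space, and let (Θ_x)_{x∈S} be bounded operators such that Θ_x P_x = P_x Θ_x = 0 and Θ_x P_y = P_y Θ_x for all x, y ∈ S. Then for every vector u, | ⟨u, (∑_{x∈S} Θ_x) u⟩ | ≤ (max_{x∈S} ‖Θ_x‖) · ∑_{x∈S} ⟨u, (1−P_x) u⟩. Consequently, if H is a self-adjoint operator and γ > 0 with γ·∑_{x∈S}(1−P_x) ≤ H (as quadratic forms), then |⟨u, (∑_{x∈S} Θ_x) u⟩| ≤ (max_{x∈S}‖Θ_x‖ / γ)·⟨u, H u⟩ for all u. -/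
/-- The abstract core of Proposition 3.8 of the paper: if each `Θ x` is annihilated
on both sides by its own projection `P x` and commutes with all projections in the
family, then `|⟨u, (∑ Θ x) u⟩| ≤ (max ‖Θ x‖) · ∑ ⟨u, (1−P x) u⟩`; consequently the
sum is form-bounded by any self-adjoint `H` dominating `γ·∑(1−P x)`. -/
theorem form_bound_by_complementary_projections {H : Type*} [NormedAddCommGroup H]
    [InnerProductSpace ℂ H] [CompleteSpace H]
    (n : ℕ) (P : Fin (n + 1) → (H →L[ℂ] H))
    (hsa : ∀ i, IsSelfAdjoint (P i))
    (hidem : ∀ i, P i * P i = P i)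
    (hcomm : ∀ i j, Commute (P i) (P j))
    (Θ : Fin (n + 1) → (H →L[ℂ] H))
    (hΘP : ∀ i, Θ i * P i = 0 ∧ P i * Θ i = 0)
    (hΘcomm : ∀ i j, Θ i * P j = P j * Θ i) :
    (∀ u : H, ‖(inner ℂ u ((∑ i, Θ i) u) : ℂ)‖
        ≤ (Finset.univ.sup' Finset.univ_nonempty fun i => ‖Θ i‖) *
            ∑ i, (inner ℂ u (((1 : H →L[ℂ] H) - P i) u) : ℂ).re)
      ∧ ∀ Hop : H →L[ℂ] H, IsSelfAdjoint Hop → ∀ γ : ℝ, 0 < γ →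
          (∀ u : H, γ * ∑ i, (inner ℂ u (((1 : H →L[ℂ] H) - P i) u) : ℂ).re
              ≤ (inner ℂ u (Hop u) : ℂ).re) →
          ∀ u : H, ‖(inner ℂ u ((∑ i, Θ i) u) : ℂ)‖
            ≤ ((Finset.univ.sup' Finset.univ_nonempty fun i => ‖Θ i‖) / γ) *
                (inner ℂ u (Hop u) : ℂ).re := by
  set M : ℝ := Finset.univ.sup' Finset.univ_nonempty fun i => ‖Θ i‖ with hM
  set Q : Fin (n + 1) → (H →L[ℂ] H) := fun i => 1 - P i with hQdef
  -- Q i is self-adjoint and idempotent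
  have hQsa : ∀ i, IsSelfAdjoint (Q i) := fun i => (IsSelfAdjoint.one _).sub (hsa i)
  have hQidem : ∀ i, Q i * Q i = Q i := by
    intro i
    simp only [hQdef, mul_sub, sub_mul, one_mul, mul_one, hidem i]
    abel
  have hΘQ : ∀ i, Q i * Θ i * Q i = Θ i := by
    intro i
    simp only [hQdef, mul_sub, sub_mul, one_mul, mul_one, (hΘP i).1, (hΘP i).2,
      zero_mul, sub_zero]
  -- key term bound
  have hre : ∀ i (u : H), (inner ℂ u (Q i u) : ℂ).re = ‖Q i u‖ ^ 2 := by
    intro i u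
    have h1 : (inner ℂ u (Q i u) : ℂ) = inner ℂ (Q i u) (Q i u) := by
      conv_lhs => rw [← hQidem i]
      have := ContinuousLinearMap.adjoint_inner_left (Q i) (Q i u) u
      rw [(hQsa i).adjoint_eq] at this
      rw [ContinuousLinearMap.mul_apply, ← this]
    rw [h1]; simpa using inner_self_eq_norm_sq (𝕜 := ℂ) (Q i u)
  have hterm : ∀ i (u : H), ‖(inner ℂ u (Θ i u) : ℂ)‖ ≤ ‖Θ i‖ * ‖Q i u‖ ^ 2 := by
    intro i u
    have h1 : (inner ℂ u (Θ i u) : ℂ) = inner ℂ (Q i u) (Θ i (Q i u)) := by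
      conv_lhs => rw [← hΘQ i]
      have := ContinuousLinearMap.adjoint_inner_left (Q i) (Θ i (Q i u)) u
      rw [(hQsa i).adjoint_eq] at this
      simp only [ContinuousLinearMap.mul_apply]
      rw [← this]
    rw [h1]
    calc ‖(inner ℂ (Q i u) (Θ i (Q i u)) : ℂ)‖
        ≤ ‖Q i u‖ * ‖Θ i (Q i u)‖ := by
          simpa using norm_inner_le_norm (𝕜 := ℂ) (Q i u) (Θ i (Q i u))
      _ ≤ ‖Q i u‖ * (‖Θ i‖ * ‖Q i u‖) := by
          exact mul_le_mul_of_nonneg_left ((Θ i).le_opNorm _) (norm_nonneg _)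
      _ = ‖Θ i‖ * ‖Q i u‖ ^ 2 := by ring
  have hMle : ∀ i, ‖Θ i‖ ≤ M := fun i =>
    Finset.le_sup' (fun i => ‖Θ i‖) (Finset.mem_univ i)
  have hM0 : 0 ≤ M := le_trans (norm_nonneg _) (hMle 0)
  have main : ∀ u : H, ‖(inner ℂ u ((∑ i, Θ i) u) : ℂ)‖
      ≤ M * ∑ i, (inner ℂ u (Q i u) : ℂ).re := by
    intro u
    have h1 : (inner ℂ u ((∑ i, Θ i) u) : ℂ) = ∑ i, (inner ℂ u (Θ i u) : ℂ) := by
      simp [ContinuousLinearMap.sum_apply, inner_sum]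
    rw [h1, Finset.mul_sum]
    refine le_trans (norm_sum_le _ _) (Finset.sum_le_sum fun i _ => ?_)
    rw [hre i u]
    exact le_trans (hterm i u)
      (mul_le_mul_of_nonneg_right (hMle i) (by positivity))
  refine ⟨main, ?_⟩
  intro Hop _ γ hγ hform u
  have hre_nonneg : 0 ≤ ∑ i, (inner ℂ u (Q i u) : ℂ).re :=
    Finset.sum_nonneg fun i _ => by rw [hre i u]; positivity
  calc ‖(inner ℂ u ((∑ i, Θ i) u) : ℂ)‖
      ≤ M * ∑ i, (inner ℂ u (Q i u) : ℂ).re := main u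
    _ = (M / γ) * (γ * ∑ i, (inner ℂ u (Q i u) : ℂ).re) := by
        field_simp
    _ ≤ (M / γ) * (inner ℂ u (Hop u) : ℂ).re := by
        exact mul_le_mul_of_nonneg_left (hform u) (div_nonneg hM0 hγ.le)
end

section
/- Let H be a positive-semidefinite self-adjoint operator on a finite-dimensional complex inner product space, let V be a self-adjoint operator, and let p, q ≥ 0 satisfy |⟨u, V u⟩| ≤ q·‖u‖² + p·⟨u, H u⟩ for all vectors u. Let z be a real number that is not an eigenvalue of H, and set R = (z·1 − H)^{−1}. Then ‖ |R|^{1/2} V |R|^{1/2} ‖ ≤ q·‖R‖ + p·(1 + |z|·‖R‖), where |R| = (R*R)^{1/2} and |R|^{1/2} is its positive square root. -/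
open scoped InnerProductSpace

section aux
variable {E : Type*} [NormedAddCommGroup E] [InnerProductSpace ℂ E] [FiniteDimensional ℂ E]

lemma sa_norm_le_of_inner (A : E →L[ℂ] E) (hA : IsSelfAdjoint A) (C : ℝ) (hC : 0 ≤ C)
    (h : ∀ u : E, ‖(inner ℂ u (A u) : ℂ)‖ ≤ C * ‖u‖ ^ 2) : ‖A‖ ≤ C := by
  have hsym : (A : E →ₗ[ℂ] E).IsSymmetric := hA.isSymmetric
  set n := Module.finrank ℂ E with hn
  have hrank : Module.finrank ℂ E = n := rfl
  set b := hsym.eigenvectorBasis hrank with hb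
  set μ := hsym.eigenvalues hrank with hμ
  have hev : ∀ i, |μ i| ≤ C := by
    intro i
    have h1 : (A : E →ₗ[ℂ] E) (b i) = (μ i : ℂ) • b i := hsym.apply_eigenvectorBasis hrank i
    have hbn : ‖b i‖ = 1 := b.orthonormal.1 i
    have h2 : (inner ℂ (b i) (A (b i)) : ℂ) = (μ i : ℂ) := by
      have : A (b i) = (μ i : ℂ) • b i := h1
      rw [this, inner_smul_right, inner_self_eq_norm_sq_to_K, hbn]
      simp
    have := h (b i)
    rw [h2, hbn] at this
    simpa using this
  refine A.opNorm_le_bound hC fun u => ?_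
  have key : ‖A u‖ ^ 2 ≤ (C * ‖u‖) ^ 2 := by
    have e1 : ‖A u‖ = ‖b.repr (A u)‖ := (b.repr.norm_map _).symm
    have e2 : ‖u‖ = ‖b.repr u‖ := (b.repr.norm_map _).symm
    rw [e1, e2, EuclideanSpace.norm_eq, EuclideanSpace.norm_eq]
    rw [Real.sq_sqrt (by positivity), mul_pow, Real.sq_sqrt (by positivity)]
    rw [Finset.mul_sum]
    refine Finset.sum_le_sum fun i _ => ?_
    have : b.repr (A u) i = (μ i : ℂ) * b.repr u i := by
      exact_mod_cast hsym.eigenvectorBasis_apply_self_apply hrank u i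
    rw [this]
    rw [norm_mul]
    have : ‖(μ i : ℂ)‖ ≤ C := by rw [Complex.norm_real, Real.norm_eq_abs]; exact hev i
    calc (‖(μ i : ℂ)‖ * ‖b.repr u i‖)^2 = ‖(μ i : ℂ)‖^2 * ‖b.repr u i‖^2 := by ring
    _ ≤ C^2 * ‖b.repr u i‖^2 := by
        gcongr
    _ = C^2 * ‖b.repr u i‖^2 := rfl
  have h1 : (0:ℝ) ≤ ‖A u‖ := norm_nonneg _
  have h2 : (0:ℝ) ≤ C * ‖u‖ := by positivity
  nlinarith

lemma commute_of_commute_pow4 (A B : E →L[ℂ] E) (hA : IsSelfAdjoint A)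
    (hApos : ∀ u : E, 0 ≤ (inner ℂ u (A u) : ℂ).re)
    (hcomm : Commute B (A ^ 4)) : Commute B A := by
  have hsym : (A : E →ₗ[ℂ] E).IsSymmetric := hA.isSymmetric
  set n := Module.finrank ℂ E with hn
  have hrank : Module.finrank ℂ E = n := rfl
  set b := hsym.eigenvectorBasis hrank with hb
  set μ := hsym.eigenvalues hrank with hμ
  have happ : ∀ (v : E) (i : Fin n), b.repr (A v) i = (μ i : ℂ) * b.repr v i := by
    intro v i
    exact_mod_cast hsym.eigenvectorBasis_apply_self_apply hrank v i
  have he : ∀ j, A (b j) = ((μ j : ℂ)) • b j := fun j => hsym.apply_eigenvectorBasis hrank j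
  have hμpos : ∀ i, 0 ≤ μ i := by
    intro i
    have hbn : ‖b i‖ = 1 := b.orthonormal.1 i
    have h2 : (inner ℂ (b i) (A (b i)) : ℂ) = (μ i : ℂ) := by
      rw [he i, inner_smul_right, inner_self_eq_norm_sq_to_K, hbn]
      simp
    have := hApos (b i)
    rw [h2] at this
    simpa using this
  have key : ∀ j : Fin n, A (B (b j)) = ((μ j : ℂ)) • B (b j) := by
    intro j
    set w := B (b j) with hw
    have h4 : A (A (A (A w))) = ((μ j : ℂ) ^ 4) • w := by
      have h1 : (A ^ 4) w = A (A (A (A w))) := by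
        simp [pow_succ, ContinuousLinearMap.mul_apply]
      have h2 : (A ^ 4) (b j) = ((μ j : ℂ) ^ 4) • b j := by
        simp only [pow_succ, pow_zero, one_mul, ContinuousLinearMap.mul_apply, he j, map_smul,
          smul_smul]
        ring_nf
      have h3 : (A ^ 4) w = B ((A ^ 4) (b j)) := by
        rw [hw, ← ContinuousLinearMap.mul_apply, ← ContinuousLinearMap.mul_apply, ← hcomm.eq]
      rw [← h1, h3, h2, map_smul]
    apply b.repr.injective
    ext i
    have c4 : b.repr (A (A (A (A w)))) i = (μ i : ℂ) ^ 4 * b.repr w i := by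
      rw [happ, happ, happ, happ]; ring
    rw [h4] at c4
    have c5 : b.repr (((μ j : ℂ) ^ 4) • w) i = ((μ j : ℂ) ^ 4) * b.repr w i := by
      rw [map_smul]; rfl
    rw [c5] at c4
    have hz : ((μ i : ℂ) ^ 4 - (μ j : ℂ) ^ 4) * b.repr w i = 0 := by linear_combination -c4
    have goalr : b.repr (A w) i = (μ i : ℂ) * b.repr w i := happ w i
    have grhs : b.repr (((μ j : ℂ)) • w) i = ((μ j : ℂ)) * b.repr w i := by
      rw [map_smul]; rfl
    rw [goalr, grhs]
    rcases mul_eq_zero.mp hz with h | h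
    · have hij : μ i = μ j := by
        have h4' : (μ i : ℝ) ^ 4 = (μ j : ℝ) ^ 4 := by
          have := sub_eq_zero.mp h
          exact_mod_cast this
        exact (pow_left_strictMonoOn₀ (n := 4) (by norm_num)).injOn (hμpos i) (hμpos j) h4'
      rw [hij]
    · rw [h, mul_zero, mul_zero]
  have : B * A = A * B := by
    apply ContinuousLinearMap.coe_injective
    apply Module.Basis.ext b.toBasis
    intro j
    simp only [OrthonormalBasis.coe_toBasis, ContinuousLinearMap.coe_mul,
      Function.comp_apply, ContinuousLinearMap.coe_coe]
    show B (A (b j)) = A (B (b j))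
    rw [key j]
    have eA : A (b j) = ((μ j : ℂ)) • b j := he j
    rw [eA, map_smul]
  exact this

end aux

set_option maxHeartbeats 2000000

/-- The resolvent estimate (3.14) of the paper: if `|⟨u,Vu⟩| ≤ q‖u‖² + p⟨u,Hu⟩`
with `H ≥ 0` self-adjoint, `z` real with invertible `z·1 − H` and inverse `R`, and
`T = |R|^{1/2}` (the positive fourth root of `R*R`), then
`‖T V T‖ ≤ q‖R‖ + p(1 + |z|‖R‖)`. -/
theorem resolvent_sandwich_bound {H : Type*} [NormedAddCommGroup H]
    [InnerProductSpace ℂ H] [FiniteDimensional ℂ H]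
    (Hop V R T : H →L[ℂ] H)
    (hH_sa : IsSelfAdjoint Hop) (hH_pos : ∀ u : H, 0 ≤ (inner ℂ u (Hop u) : ℂ).re)
    (hV_sa : IsSelfAdjoint V)
    (p q : ℝ) (hp : 0 ≤ p) (hq : 0 ≤ q)
    (hbound : ∀ u : H,
      ‖(inner ℂ u (V u) : ℂ)‖ ≤ q * ‖u‖ ^ 2 + p * (inner ℂ u (Hop u) : ℂ).re)
    (z : ℝ) (hzL : R * ((z : ℂ) • 1 - Hop) = 1) (hzR : ((z : ℂ) • 1 - Hop) * R = 1)
    (hT_sa : IsSelfAdjoint T) (hT_pos : ∀ u : H, 0 ≤ (inner ℂ u (T u) : ℂ).re)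
    (hT4 : T ^ 4 = star R * R) :
    ‖T * V * T‖ ≤ q * ‖R‖ + p * (1 + |z| * ‖R‖) := by
  have hzn : (0:ℝ) ≤ 1 + |z| * ‖R‖ := by positivity
  have hC : (0:ℝ) ≤ q * ‖R‖ + p * (1 + |z| * ‖R‖) :=
    add_nonneg (mul_nonneg hq (norm_nonneg _)) (mul_nonneg hp hzn)
  rcases subsingleton_or_nontrivial H with hs | hnt
  · have h0 : T * V * T = 0 := Subsingleton.elim _ _
    rw [h0, norm_zero]; exact hC
  have hA_sa : IsSelfAdjoint ((z : ℂ) • (1 : H →L[ℂ] H) - Hop) := by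
    show star ((z : ℂ) • (1 : H →L[ℂ] H) - Hop) = (z : ℂ) • (1 : H →L[ℂ] H) - Hop
    rw [star_sub, star_smul, star_one, hH_sa.star_eq, Complex.star_def, Complex.conj_ofReal]
  have hR_sa : star R = R := by
    have h1 : star R * ((z : ℂ) • 1 - Hop) = 1 := by
      have h2 := congrArg star hzR
      rwa [star_mul, star_one, hA_sa.star_eq] at h2
    calc star R = star R * (((z : ℂ) • 1 - Hop) * R) := by rw [hzR, mul_one]
    _ = (star R * ((z : ℂ) • 1 - Hop)) * R := by rw [mul_assoc]
    _ = R := by rw [h1, one_mul]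
  have hcommHR : Commute Hop R := by
    have h := hzL.trans hzR.symm
    simp only [mul_sub, sub_mul, mul_smul_comm, smul_mul_assoc, mul_one, one_mul] at h
    exact (sub_right_inj.mp h).symm
  have hcommHT : Commute Hop T := by
    refine commute_of_commute_pow4 T Hop hT_sa hT_pos ?_
    rw [hT4, hR_sa]
    exact hcommHR.mul_right hcommHR
  have hTT_sa : star (T * T) = T * T := by rw [star_mul, hT_sa.star_eq]
  have hTT4 : (T * T) * (T * T) = star R * R := by
    rw [← hT4]; noncomm_ring
  have hTTnorm : ‖T * T‖ = ‖R‖ := by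
    have h1 : ‖T * T‖ * ‖T * T‖ = ‖R‖ * ‖R‖ := by
      calc ‖T * T‖ * ‖T * T‖ = ‖star (T * T) * (T * T)‖ := (CStarRing.norm_star_mul_self).symm
      _ = ‖star R * R‖ := by rw [hTT_sa, hTT4]
      _ = ‖R‖ * ‖R‖ := CStarRing.norm_star_mul_self
    calc ‖T * T‖ = Real.sqrt (‖T * T‖ * ‖T * T‖) := (Real.sqrt_mul_self (norm_nonneg _)).symm
    _ = Real.sqrt (‖R‖ * ‖R‖) := by rw [h1]
    _ = ‖R‖ := Real.sqrt_mul_self (norm_nonneg _)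
  have hHR : Hop * R = (z : ℂ) • R - 1 := by
    have h3 : (z : ℂ) • R - Hop * R = 1 := by
      calc (z : ℂ) • R - Hop * R = ((z : ℂ) • 1 - Hop) * R := by
            rw [sub_mul, smul_mul_assoc, one_mul]
      _ = 1 := hzR
    rw [← h3]; abel
  have hHRnorm : ‖Hop * R‖ ≤ |z| * ‖R‖ + 1 := by
    rw [hHR]
    calc ‖(z : ℂ) • R - 1‖ ≤ ‖(z : ℂ) • R‖ + ‖(1 : H →L[ℂ] H)‖ := norm_sub_le _ _
    _ = |z| * ‖R‖ + 1 := by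
        simp [norm_smul, Complex.norm_real, Real.norm_eq_abs]
  have hKnorm : ‖Hop * (T * T)‖ ≤ 1 + |z| * ‖R‖ := by
    have cTT : Commute Hop (T * T) := hcommHT.mul_right hcommHT
    have hK_sa : star (Hop * (T * T)) = Hop * (T * T) := by
      rw [star_mul, hTT_sa, hH_sa.star_eq, ← cTT.eq]
    have hKK : (Hop * (T * T)) * (Hop * (T * T)) = (Hop * R) * (Hop * R) := by
      calc (Hop * (T * T)) * (Hop * (T * T))
          = Hop * ((T * T) * Hop) * (T * T) := by noncomm_ring
      _ = Hop * (Hop * (T * T)) * (T * T) := by rw [cTT.eq]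
      _ = (Hop * Hop) * ((T * T) * (T * T)) := by noncomm_ring
      _ = (Hop * Hop) * (star R * R) := by rw [hTT4]
      _ = (Hop * Hop) * (R * R) := by rw [hR_sa]
      _ = Hop * (Hop * R) * R := by noncomm_ring
      _ = Hop * (R * Hop) * R := by rw [hcommHR.eq]
      _ = (Hop * R) * (Hop * R) := by noncomm_ring
    have h1 : ‖Hop * (T * T)‖ * ‖Hop * (T * T)‖ ≤ (|z| * ‖R‖ + 1) * (|z| * ‖R‖ + 1) := by
      calc ‖Hop * (T * T)‖ * ‖Hop * (T * T)‖
          = ‖star (Hop * (T * T)) * (Hop * (T * T))‖ := (CStarRing.norm_star_mul_self).symm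
      _ = ‖(Hop * R) * (Hop * R)‖ := by rw [hK_sa, hKK]
      _ ≤ ‖Hop * R‖ * ‖Hop * R‖ := norm_mul_le _ _
      _ ≤ (|z| * ‖R‖ + 1) * (|z| * ‖R‖ + 1) :=
          mul_le_mul hHRnorm hHRnorm (norm_nonneg _) (by positivity)
    have h2 : ‖Hop * (T * T)‖ ≤ |z| * ‖R‖ + 1 := by
      calc ‖Hop * (T * T)‖ = Real.sqrt (‖Hop * (T * T)‖ * ‖Hop * (T * T)‖) :=
        (Real.sqrt_mul_self (norm_nonneg _)).symm
      _ ≤ Real.sqrt ((|z| * ‖R‖ + 1) * (|z| * ‖R‖ + 1)) := Real.sqrt_le_sqrt h1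
      _ = |z| * ‖R‖ + 1 := Real.sqrt_mul_self (by positivity)
    linarith
  have hTVT_sa : IsSelfAdjoint (T * V * T) := by
    show star (T * V * T) = T * V * T
    rw [star_mul, star_mul, hT_sa.star_eq, hV_sa.star_eq, ← mul_assoc]
  refine sa_norm_le_of_inner _ hTVT_sa _ hC fun u => ?_
  have hsymT := hT_sa.isSymmetric
  have e1 : (inner ℂ u ((T * V * T) u) : ℂ) = inner ℂ (T u) (V (T u)) := by
    rw [ContinuousLinearMap.mul_apply, ContinuousLinearMap.mul_apply]
    exact (hsymT u (V (T u))).symm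
  rw [e1]
  have step1 : ‖T u‖ ^ 2 ≤ ‖R‖ * ‖u‖ ^ 2 := by
    have e2 : (‖T u‖ : ℝ) ^ 2 = ((inner ℂ (T u) (T u) : ℂ)).re := by
      rw [← @inner_self_eq_norm_sq ℂ, RCLike.re_to_complex]
    have e3 : (inner ℂ (T u) (T u) : ℂ) = inner ℂ u ((T * T) u) := hsymT u (T u)
    have e4 : ((inner ℂ u ((T * T) u) : ℂ)).re ≤ ‖R‖ * ‖u‖ ^ 2 := by
      calc ((inner ℂ u ((T * T) u) : ℂ)).re ≤ ‖(inner ℂ u ((T * T) u) : ℂ)‖ :=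
        Complex.re_le_norm _
      _ ≤ ‖u‖ * ‖(T * T) u‖ := by
          exact norm_inner_le_norm _ _
      _ ≤ ‖u‖ * (‖T * T‖ * ‖u‖) := by
          have h5 := (T * T).le_opNorm u
          have hu := norm_nonneg u
          nlinarith
      _ = ‖R‖ * ‖u‖ ^ 2 := by rw [hTTnorm]; ring
    rw [e2, e3]; exact e4
  have step2 : ((inner ℂ (T u) (Hop (T u)) : ℂ)).re ≤ (1 + |z| * ‖R‖) * ‖u‖ ^ 2 := by
    have e5 : (inner ℂ (T u) (Hop (T u)) : ℂ) = inner ℂ u ((Hop * (T * T)) u) := by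
      have e6 : (inner ℂ (T u) (Hop (T u)) : ℂ) = inner ℂ u (T (Hop (T u))) :=
        hsymT u (Hop (T u))
      have h7 : T * Hop = Hop * T := hcommHT.eq.symm
      have e7 : T (Hop (T u)) = (Hop * (T * T)) u := by
        rw [ContinuousLinearMap.mul_apply Hop (T * T) u, ContinuousLinearMap.mul_apply T T u]
        calc T (Hop (T u)) = (T * Hop) (T u) := (ContinuousLinearMap.mul_apply T Hop (T u)).symm
        _ = (Hop * T) (T u) := by rw [h7]
        _ = Hop (T (T u)) := ContinuousLinearMap.mul_apply Hop T (T u)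
      rw [e6, e7]
    rw [e5]
    calc ((inner ℂ u ((Hop * (T * T)) u) : ℂ)).re
        ≤ ‖(inner ℂ u ((Hop * (T * T)) u) : ℂ)‖ := Complex.re_le_norm _
    _ ≤ ‖u‖ * ‖(Hop * (T * T)) u‖ := by
        exact norm_inner_le_norm _ _
    _ ≤ ‖u‖ * (‖Hop * (T * T)‖ * ‖u‖) := by
        have h5 := (Hop * (T * T)).le_opNorm u
        have hu := norm_nonneg u
        nlinarith
    _ ≤ (1 + |z| * ‖R‖) * ‖u‖ ^ 2 := by
        have hu := norm_nonneg u
        nlinarith [hKnorm]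
  calc ‖(inner ℂ (T u) (V (T u)) : ℂ)‖ ≤ q * ‖T u‖ ^ 2
      + p * ((inner ℂ (T u) (Hop (T u)) : ℂ)).re := hbound (T u)
  _ ≤ q * (‖R‖ * ‖u‖ ^ 2) + p * ((1 + |z| * ‖R‖) * ‖u‖ ^ 2) := by
      have h8 := hH_pos (T u)
      gcongr
  _ = (q * ‖R‖ + p * (1 + |z| * ‖R‖)) * ‖u‖ ^ 2 := by ring
end

section
/- Let H be a self-adjoint operator on a finite-dimensional complex Hilbert space, λ a real number with H ≥ λ·1, P an orthogonal projection commuting with H such that ‖(H − λ·1)P‖ ≤ c for some c ≥ 0, and ρ a positive-semidefinite operator with trace 1 satisfying PρP = ρ. Then for every operator A: Re tr( ρ · A*(HA − AH) ) ≥ −c·‖A‖², and | Im tr( ρ · A*(HA − AH) ) | ≤ c·‖A‖². -/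
lemma trace_onb {H : Type*} [NormedAddCommGroup H] [InnerProductSpace ℂ H]
    [FiniteDimensional ℂ H] {ι : Type*} [Fintype ι] [DecidableEq ι]
    (b : OrthonormalBasis ι ℂ H) (f : H →ₗ[ℂ] H) :
    LinearMap.trace ℂ H f = ∑ i, (inner ℂ (b i) (f (b i)) : ℂ) := by
  rw [LinearMap.trace_eq_matrix_trace ℂ b.toBasis f, Matrix.trace]
  congr 1
  ext i
  rw [Matrix.diag_apply, LinearMap.toMatrix_apply, b.coe_toBasis,
    b.coe_toBasis_repr_apply, b.repr_apply_apply]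

lemma tr_clm_comm {H : Type*} [NormedAddCommGroup H] [InnerProductSpace ℂ H]
    [FiniteDimensional ℂ H] (X Y : H →L[ℂ] H) :
    LinearMap.trace ℂ H (X * Y).toLinearMap = LinearMap.trace ℂ H (Y * X).toLinearMap := by
  have h1 : (X * Y).toLinearMap = X.toLinearMap * Y.toLinearMap := rfl
  have h2 : (Y * X).toLinearMap = Y.toLinearMap * X.toLinearMap := rfl
  rw [h1, h2, LinearMap.trace_mul_comm]

/-- Part (i) of the unnumbered lemma in Section 3.4 of the paper: a state
`ω(·) = tr(ρ ·)` supported on the spectral subspace `P` of a low-lying group of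
eigenvalues of `H` (of diameter at most `c` above the bottom `λ`) is an approximate
ground state: `Re ω(A*[H,A]) ≥ −c‖A‖²` and `|Im ω(A*[H,A])| ≤ c‖A‖²`. -/
theorem approximate_ground_state_energy_bound {H : Type*} [NormedAddCommGroup H]
    [InnerProductSpace ℂ H] [FiniteDimensional ℂ H]
    (Hop P ρ : H →L[ℂ] H) (lam c : ℝ) (hc : 0 ≤ c)
    (hH_sa : IsSelfAdjoint Hop)
    (hH_ge : ∀ u : H, lam * ‖u‖ ^ 2 ≤ (inner ℂ u (Hop u) : ℂ).re)
    (hP_sa : IsSelfAdjoint P) (hP_idem : P * P = P)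
    (hPH : Hop * P = P * Hop)
    (hnorm : ‖(Hop - (lam : ℂ) • 1) * P‖ ≤ c)
    (hρ_sa : IsSelfAdjoint ρ) (hρ_pos : ∀ u : H, 0 ≤ (inner ℂ u (ρ u) : ℂ).re)
    (htr : LinearMap.trace ℂ H ρ.toLinearMap = 1)
    (hsupp : P * ρ * P = ρ) :
    ∀ A : H →L[ℂ] H,
      -c * ‖A‖ ^ 2
          ≤ (LinearMap.trace ℂ H (ρ * (star A * (Hop * A - A * Hop))).toLinearMap).re
        ∧ |(LinearMap.trace ℂ H (ρ * (star A * (Hop * A - A * Hop))).toLinearMap).im|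
            ≤ c * ‖A‖ ^ 2 := by
  intro A
  set K : H →L[ℂ] H := Hop - (lam : ℂ) • 1 with hK
  -- K is self-adjoint
  have hK_sa : IsSelfAdjoint K := by
    refine hH_sa.sub ?_
    rw [IsSelfAdjoint, star_smul, star_one, Complex.star_def, Complex.conj_ofReal]
  have hK_sym : ∀ u v : H, (inner ℂ (K u) v : ℂ) = inner ℂ u (K v) :=
    fun u v => (ContinuousLinearMap.isSelfAdjoint_iff_isSymmetric.mp hK_sa) u v
  -- K is positive
  have hK_pos : ∀ u : H, 0 ≤ (inner ℂ u (K u) : ℂ).re := by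
    intro u
    have : (inner ℂ u (K u) : ℂ) = inner ℂ u (Hop u) - (lam : ℂ) * inner ℂ u u := by
      rw [hK]
      simp only [ContinuousLinearMap.sub_apply, ContinuousLinearMap.smul_apply,
        ContinuousLinearMap.one_apply, inner_sub_right]
      rw [inner_smul_right]
    rw [this]
    have cc : ∀ r : ℝ, Complex.ofReal r = @RCLike.ofReal ℂ _ r := fun r => rfl
    have h2 : ((lam : ℂ) * (inner ℂ u u : ℂ)).re = lam * ‖u‖ ^ 2 := by
      rw [inner_self_eq_norm_sq_to_K, ← RCLike.re_eq_complex_re, cc, RCLike.re_ofReal_mul,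
        ← RCLike.ofReal_pow, RCLike.ofReal_re]
    rw [Complex.sub_re, h2]
    linarith [hH_ge u]
  -- inner products with K are real
  have hK_real : ∀ u : H, (inner ℂ u (K u) : ℂ).im = 0 := by
    intro u
    have h1 : (starRingEnd ℂ) (inner ℂ u (K u) : ℂ) = inner ℂ u (K u) := by
      rw [inner_conj_symm, hK_sym]
    exact Complex.conj_eq_iff_im.mp h1
  -- eigendecomposition of ρ
  have hρ_sym : ρ.toLinearMap.IsSymmetric :=
    ContinuousLinearMap.isSelfAdjoint_iff_isSymmetric.mp hρ_sa
  set e := hρ_sym.eigenvectorBasis rfl with he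
  set μ := hρ_sym.eigenvalues rfl with hμ
  have he_norm : ∀ i, ‖e i‖ = 1 := fun i => e.orthonormal.1 i
  have he_inner : ∀ i, (inner ℂ (e i) (e i) : ℂ) = 1 := by
    intro i
    rw [inner_self_eq_norm_sq_to_K, he_norm]
    norm_num
  have hρ_apply : ∀ i, ρ (e i) = (μ i : ℂ) • e i := fun i =>
    hρ_sym.apply_eigenvectorBasis rfl i
  -- key trace formula
  have key : ∀ B : H →L[ℂ] H,
      LinearMap.trace ℂ H (ρ * B).toLinearMap
        = ∑ i, (μ i : ℂ) * (inner ℂ (e i) (B (e i)) : ℂ) := by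
    intro B
    rw [trace_onb e]
    refine Finset.sum_congr rfl (fun i _ => ?_)
    have h1 : (ρ * B).toLinearMap (e i) = ρ (B (e i)) := rfl
    have h2 := hρ_sym (e i) (B (e i))
    simp only [ContinuousLinearMap.coe_coe] at h2
    rw [h1, ← h2, hρ_apply, inner_smul_left, Complex.conj_ofReal]
  -- eigenvalues nonneg and sum to 1
  have hμ0 : ∀ i, 0 ≤ μ i := by
    intro i
    have h1 : (inner ℂ (e i) (ρ (e i)) : ℂ) = (μ i : ℂ) := by
      rw [hρ_apply, inner_smul_right, he_inner, mul_one]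
    have := hρ_pos (e i)
    rw [h1] at this
    simpa using this
  have hμsum : ∑ i, μ i = 1 := by
    have h1 := key 1
    rw [mul_one, htr] at h1
    have h2 : (1 : ℂ) = ∑ i, (μ i : ℂ) := by
      rw [h1]
      refine Finset.sum_congr rfl (fun i _ => ?_)
      simp [he_inner i]
    have h3 : ((∑ i, μ i : ℝ) : ℂ) = ((1 : ℝ) : ℂ) := by
      push_cast
      exact h2.symm
    exact_mod_cast h3
  -- bound on trace against bounded operator
  have habs : ∀ B : H →L[ℂ] H,
      ‖LinearMap.trace ℂ H (ρ * B).toLinearMap‖ ≤ ‖B‖ := by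
    intro B
    rw [key]
    calc ‖∑ i, (μ i : ℂ) * (inner ℂ (e i) (B (e i)) : ℂ)‖
        ≤ ∑ i, ‖(μ i : ℂ) * (inner ℂ (e i) (B (e i)) : ℂ)‖ := by
          exact norm_sum_le _ _
      _ ≤ ∑ i, μ i * ‖B‖ := by
          refine Finset.sum_le_sum (fun i _ => ?_)
          rw [norm_mul, Complex.norm_of_nonneg (hμ0 i)]
          refine mul_le_mul_of_nonneg_left ?_ (hμ0 i)
          calc ‖(inner ℂ (e i) (B (e i)) : ℂ)‖
              = ‖(inner ℂ (e i) (B (e i)) : ℂ)‖ := rfl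
            _ ≤ ‖e i‖ * ‖B (e i)‖ := norm_inner_le_norm _ _
            _ ≤ ‖e i‖ * (‖B‖ * ‖e i‖) :=
                mul_le_mul_of_nonneg_left (B.le_opNorm _) (norm_nonneg _)
            _ = ‖B‖ := by rw [he_norm]; ring
      _ = ‖B‖ := by rw [← Finset.sum_mul, hμsum, one_mul]
  -- norm of P
  have hPnorm : ‖P‖ ≤ 1 := by
    refine ContinuousLinearMap.opNorm_le_bound _ zero_le_one (fun x => ?_)
    have hP_sym : ∀ u v : H, (inner ℂ (P u) v : ℂ) = inner ℂ u (P v) :=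
      fun u v => (ContinuousLinearMap.isSelfAdjoint_iff_isSymmetric.mp hP_sa) u v
    have h1 : (inner ℂ (P x) (P x) : ℂ) = inner ℂ x (P x) := by
      rw [hP_sym]
      have : P (P x) = P x := by
        have := congrArg (fun T : H →L[ℂ] H => T x) hP_idem
        simpa using this
      rw [this]
    have h2 : ‖P x‖ ^ 2 = (inner ℂ x (P x) : ℂ).re := by
      rw [← h1, inner_self_eq_norm_sq_to_K, ← RCLike.re_eq_complex_re,
        ← RCLike.ofReal_pow, RCLike.ofReal_re]
    have h3 : (inner ℂ x (P x) : ℂ).re ≤ ‖x‖ * ‖P x‖ := by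
      calc (inner ℂ x (P x) : ℂ).re ≤ ‖(inner ℂ x (P x) : ℂ)‖ := Complex.re_le_norm _
        _ = ‖(inner ℂ x (P x) : ℂ)‖ := rfl
        _ ≤ ‖x‖ * ‖P x‖ := norm_inner_le_norm _ _
    nlinarith [norm_nonneg (P x), norm_nonneg x]
  -- algebraic rewriting of the commutator
  have halg : Hop * A - A * Hop = K * A - A * K := by
    simp [hK, sub_mul, mul_sub, smul_mul_assoc, mul_smul_comm]
  set C : H →L[ℂ] H := star A * (K * A) with hC
  set Dfull : H →L[ℂ] H := star A * (A * K) with hDfull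
  have hsplit : ρ * (star A * (Hop * A - A * Hop)) = ρ * C - ρ * Dfull := by
    rw [halg, hC, hDfull]
    noncomm_ring
  set T := LinearMap.trace ℂ H (ρ * (star A * (Hop * A - A * Hop))).toLinearMap with hT
  set t1 := LinearMap.trace ℂ H (ρ * C).toLinearMap with ht1
  set t2 := LinearMap.trace ℂ H (ρ * Dfull).toLinearMap with ht2
  have hTsplit : T = t1 - t2 := by
    rw [hT, hsplit, ht1, ht2]
    have : (ρ * C - ρ * Dfull).toLinearMap = (ρ * C).toLinearMap - (ρ * Dfull).toLinearMap := rfl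
    rw [this, map_sub]
  -- t1 analysis
  have hCinner : ∀ u : H, (inner ℂ u (C u) : ℂ) = inner ℂ (A u) (K (A u)) := by
    intro u
    have h1 : C u = (ContinuousLinearMap.adjoint A) (K (A u)) := by
      rw [hC]
      simp [ContinuousLinearMap.star_eq_adjoint, ContinuousLinearMap.mul_apply]
    rw [h1, ContinuousLinearMap.adjoint_inner_right]
  have ht1re : 0 ≤ t1.re := by
    rw [ht1, key, Complex.re_sum]
    refine Finset.sum_nonneg (fun i _ => ?_)
    rw [Complex.mul_re, Complex.ofReal_re, Complex.ofReal_im, zero_mul, sub_zero]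
    exact mul_nonneg (hμ0 i) (by rw [hCinner]; exact hK_pos _)
  have ht1im : t1.im = 0 := by
    rw [ht1, key, Complex.im_sum]
    refine Finset.sum_eq_zero (fun i _ => ?_)
    rw [Complex.mul_im, Complex.ofReal_re, Complex.ofReal_im, zero_mul, add_zero]
    rw [hCinner, hK_real, mul_zero]
  -- t2 analysis
  set D : H →L[ℂ] H := P * Dfull * P with hD
  have ht2' : t2 = LinearMap.trace ℂ H (ρ * D).toLinearMap := by
    rw [ht2]
    conv_lhs => rw [← hsupp]
    rw [hD]
    have h1 : P * ρ * P * Dfull = P * (ρ * (P * Dfull)) := by noncomm_ring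
    have h2 : ρ * (P * Dfull * P) = ρ * (P * Dfull) * P := by noncomm_ring
    rw [h1, h2, tr_clm_comm]
  have hDnorm : ‖D‖ ≤ c * ‖A‖ ^ 2 := by
    have h1 : D = (P * star A * A) * (K * P) := by rw [hD, hDfull, hK]; noncomm_ring
    have h2 : ‖P * star A * A‖ ≤ ‖A‖ ^ 2 := by
      calc ‖P * star A * A‖ ≤ ‖P * star A‖ * ‖A‖ := norm_mul_le _ _
        _ ≤ ‖P‖ * ‖star A‖ * ‖A‖ :=
            mul_le_mul_of_nonneg_right (norm_mul_le _ _) (norm_nonneg _)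
        _ = ‖P‖ * ‖A‖ * ‖A‖ := by rw [norm_star A]
        _ ≤ 1 * ‖A‖ * ‖A‖ := by
            refine mul_le_mul_of_nonneg_right ?_ (norm_nonneg _)
            exact mul_le_mul_of_nonneg_right hPnorm (norm_nonneg _)
        _ = ‖A‖ ^ 2 := by ring
    have h3 : ‖K * P‖ ≤ c := hnorm
    calc ‖D‖ = ‖(P * star A * A) * (K * P)‖ := by rw [h1]
      _ ≤ ‖P * star A * A‖ * ‖K * P‖ := norm_mul_le _ _
      _ ≤ ‖A‖ ^ 2 * c := by
          refine mul_le_mul h2 h3 (norm_nonneg _) (by positivity)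
      _ = c * ‖A‖ ^ 2 := by ring
  have ht2abs : ‖t2‖ ≤ c * ‖A‖ ^ 2 := by
    rw [ht2']
    exact le_trans (habs D) hDnorm
  constructor
  · rw [hTsplit, Complex.sub_re]
    have : t2.re ≤ c * ‖A‖ ^ 2 := le_trans (Complex.re_le_norm _) ht2abs
    linarith
  · rw [hTsplit, Complex.sub_im, ht1im, zero_sub, abs_neg]
    exact le_trans (Complex.abs_im_le_norm _) ht2abs
end

section
/- Let E be a normed additive commutative group, F : ℕ → (0,∞) a function, M ≥ 0, and g : Finset(ℤ) → E such that for all x, y ∈ ℤ, the sum over all finite X ⊆ ℤ with x ∈ X and y ∈ X of ‖g(X)‖ is at most M·F(|x−y|). Let Z_1 ⊆ Z_2 ⊆ ⋯ ⊆ Z_N be a nested chain of nonempty finite subsets of ℤ with diam(Z_1) = n. Then ∑_{k=1}^{N} ‖g(Z_k)‖ ≤ M·F(n). -/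
/-- Part (1) of Proposition 6.3 of the paper: for an interaction `g` whose partial
sums over distinct finite sets containing two fixed points `x, y` are bounded by
`M·F(|x−y|)`, the norms along any nested chain of nonempty finite sets
`Z 0 ⊂ Z 1 ⊂ ⋯ ⊂ Z N` sum to at most `M·F(diam (Z 0))`. -/
theorem fnorm_nested_chain_bound {E : Type*} [NormedAddCommGroup E]
    (F : ℕ → ℝ) (hF : ∀ n, 0 < F n) (M : ℝ) (hM : 0 ≤ M)
    (g : Finset ℤ → E)
    (hg : ∀ x y : ℤ, ∀ s : Finset (Finset ℤ), (∀ X ∈ s, x ∈ X ∧ y ∈ X) →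
      ∑ X ∈ s, ‖g X‖ ≤ M * F (x - y).natAbs)
    (N : ℕ) (Z : Fin (N + 1) → Finset ℤ) (hZ : StrictMono Z)
    (hne : (Z 0).Nonempty) (n : ℕ)
    (hdiam : (Z 0).max' hne - (Z 0).min' hne = (n : ℤ)) :
    ∑ k : Fin (N + 1), ‖g (Z k)‖ ≤ M * F n := by
  set x := (Z 0).max' hne
  set y := (Z 0).min' hne
  have hsub : ∀ k, Z 0 ⊆ Z k := fun k => hZ.monotone (Fin.zero_le k)
  have key := hg x y (Finset.univ.image Z) (by
    intro X hX
    simp only [Finset.mem_image, Finset.mem_univ, true_and] at hX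
    obtain ⟨k, rfl⟩ := hX
    exact ⟨hsub k ((Z 0).max'_mem hne), hsub k ((Z 0).min'_mem hne)⟩)
  rw [Finset.sum_image (fun a _ b _ h => hZ.injective h)] at key
  have : (x - y).natAbs = n := by
    have := (Z 0).min'_le x ((Z 0).max'_mem hne)
    omega
  rwa [this] at key
end

section
/- Let E be a normed additive commutative group, R ≥ 1 an integer, M ≥ 0, and g : Finset(ℤ) → E such that g(X) = 0 whenever diam(X) > R and ‖g(X)‖ ≤ M for all X. Let F : ℕ → (0,∞) be monotone non-increasing. Then there exists C ≥ 0 such that for all x, y ∈ ℤ, the sum over all finite X ⊆ ℤ with x ∈ X and y ∈ X of ‖g(X)‖ is at most C·F(|x−y|); in particular one may take C = 2^{3R}·M/F(R). -/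
/-- Part (2) of Proposition 6.3 of the paper: every uniformly bounded finite-range
interaction `g` on `ℤ` has finite `F`-norm for any positive non-increasing `F`;
one may take the constant `C = 2^{3R}·M/F(R)`. -/
theorem finite_range_has_finite_fnorm {E : Type*} [NormedAddCommGroup E]
    (R : ℕ) (hR : 1 ≤ R) (M : ℝ) (hM : 0 ≤ M)
    (g : Finset ℤ → E)
    (hrange : ∀ X : Finset ℤ, (∃ x ∈ X, ∃ y ∈ X, (R : ℤ) < y - x) → g X = 0)
    (hbdd : ∀ X : Finset ℤ, ‖g X‖ ≤ M)
    (F : ℕ → ℝ) (hFpos : ∀ n, 0 < F n) (hFanti : Antitone F) :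
    ∃ C : ℝ, 0 ≤ C ∧ C = (2 : ℝ) ^ (3 * R) * M / F R ∧
      ∀ x y : ℤ, ∀ s : Finset (Finset ℤ), (∀ X ∈ s, x ∈ X ∧ y ∈ X) →
        ∑ X ∈ s, ‖g X‖ ≤ C * F (x - y).natAbs := by
  classical
  have hFR := hFpos R
  refine ⟨(2 : ℝ) ^ (3 * R) * M / F R, by positivity, rfl, ?_⟩
  intro x y s hs
  by_cases hxy : (R : ℤ) < |x - y|
  · have hz : ∀ X ∈ s, ‖g X‖ = 0 := by
      intro X hX
      obtain ⟨hx, hy⟩ := hs X hX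
      rw [norm_eq_zero]
      rcases abs_cases (x - y) with ⟨h1, _⟩ | ⟨h1, _⟩
      · exact hrange X ⟨y, hy, x, hx, by omega⟩
      · exact hrange X ⟨x, hx, y, hy, by omega⟩
    rw [Finset.sum_eq_zero hz]
    have := hFpos (x - y).natAbs
    positivity
  · push_neg at hxy
    rw [abs_le] at hxy
    have hF : F R ≤ F (x - y).natAbs := hFanti (by omega)
    have hsum : ∑ X ∈ s, ‖g X‖ ≤ (2 : ℝ) ^ (3 * R) * M := by
      have heq : ∑ X ∈ s.filter (fun X => g X ≠ 0), ‖g X‖ = ∑ X ∈ s, ‖g X‖ := by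
        apply Finset.sum_filter_of_ne
        intro X _ h
        exact fun h0 => h (by rw [h0, norm_zero])
      rw [← heq]
      have hsub : s.filter (fun X => g X ≠ 0) ⊆ (Finset.Icc (x - R) (x + R)).powerset := by
        intro X hX
        rw [Finset.mem_filter] at hX
        obtain ⟨hXs, hX0⟩ := hX
        obtain ⟨hx, _⟩ := hs X hXs
        rw [Finset.mem_powerset]
        intro z hz
        rw [Finset.mem_Icc]
        constructor
        · by_contra h
          exact hX0 (hrange X ⟨z, hz, x, hx, by omega⟩)
        · by_contra h
          exact hX0 (hrange X ⟨x, hx, z, hz, by omega⟩)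
      have hcard : (s.filter (fun X => g X ≠ 0)).card ≤ 2 ^ (3 * R) := by
        calc (s.filter (fun X => g X ≠ 0)).card
            ≤ (Finset.Icc (x - R) (x + R)).powerset.card := Finset.card_le_card hsub
          _ = 2 ^ (Finset.Icc (x - R) (x + R)).card := Finset.card_powerset _
          _ = 2 ^ (2 * R + 1) := by rw [Int.card_Icc]; congr 1; omega
          _ ≤ 2 ^ (3 * R) := Nat.pow_le_pow_right (by norm_num) (by omega)
      calc ∑ X ∈ s.filter (fun X => g X ≠ 0), ‖g X‖
          ≤ (s.filter (fun X => g X ≠ 0)).card • M :=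
            Finset.sum_le_card_nsmul _ _ M (fun X _ => hbdd X)
        _ = ((s.filter (fun X => g X ≠ 0)).card : ℝ) * M := by
            rw [nsmul_eq_mul]
        _ ≤ (2 : ℝ) ^ (3 * R) * M := by
            apply mul_le_mul_of_nonneg_right _ hM
            exact_mod_cast hcard
    calc ∑ X ∈ s, ‖g X‖ ≤ (2 : ℝ) ^ (3 * R) * M := hsum
      _ = (2 : ℝ) ^ (3 * R) * M / F R * F R := by field_simp
      _ ≤ (2 : ℝ) ^ (3 * R) * M / F R * F (x - y).natAbs := by
          apply mul_le_mul_of_nonneg_left hF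
          positivity
end
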